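/- Every long-refinement graph on at least 2 vertices is connected. -/

import Mathlib

variable {V : Type*}

/-- Colour Refinement equivalence: `crRel G i u v` means `u` and `v` get the same colour
after `i` iterations of Colour Refinement on `G` (starting monochromatic). -/
def crRel (G : SimpleGraph V) : ℕ → V → V → Prop
  | 0 => fun _ _ => True
  | (i+1) => fun u v => crRel G i u v ∧ ∀ w : V,
      Nat.card {x : V // G.Adj u x ∧ crRel G i x w} =
      Nat.card {x : V // G.Adj v x ∧ crRel G i x w}

/-- The colour class of `v` after `i` iterations. -/
def crClass (G : SimpleGraph V) (i : ℕ) (v : V) : Set V :=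
  {u : V | crRel G i u v}

/-- The partition `π^i` induced by the colouring after `i` iterations. -/
def crPartition (G : SimpleGraph V) (i : ℕ) : Set (Set V) :=
  {C : Set V | ∃ v : V, C = crClass G i v}

/-- `G` is a long-refinement graph: Colour Refinement takes exactly `n - 1` iterations
to stabilise. -/
def IsLongRefinement [Fintype V] (G : SimpleGraph V) : Prop :=
  (∀ i < Fintype.card V - 1, crPartition G (i+1) ≠ crPartition G i) ∧
  crPartition G (Fintype.card V) = crPartition G (Fintype.card V - 1)

/-- The degree of a vertex. -/
noncomputable def vdeg (G : SimpleGraph V) (v : V) : ℕ :=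
  Nat.card {u : V // G.Adj v u}

/-- `degOn G C C' k` : every vertex of `C` has exactly `k` neighbours in `C'`,
i.e. `deg_{C'}(C) = k`. -/
def degOn (G : SimpleGraph V) (C C' : Set V) (k : ℕ) : Prop :=
  ∀ v ∈ C, Nat.card {x : V // x ∈ C' ∧ G.Adj v x} = k

/-- `C` is balanced with respect to `C'`: `deg_{C'}(C)` is defined. -/
def BalancedWrt (G : SimpleGraph V) (C C' : Set V) : Prop :=
  ∃ k, degOn G C C' k

open Finset

set_option linter.unusedSectionVars false

section Basics

variable {G : SimpleGraph V}

lemma crRel_zero (u v : V) : crRel G 0 u v := trivial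

lemma crRel_succ_iff {i : ℕ} {u v : V} : crRel G (i+1) u v ↔
    (crRel G i u v ∧ ∀ w : V,
      Nat.card {x : V // G.Adj u x ∧ crRel G i x w} =
      Nat.card {x : V // G.Adj v x ∧ crRel G i x w}) := Iff.rfl

lemma crRel_equivalence (i : ℕ) : Equivalence (crRel G i) := by
  induction i with
  | zero => exact ⟨fun _ => trivial, fun _ => trivial, fun _ _ => trivial⟩
  | succ i ih =>
    refine ⟨fun x => ⟨ih.refl x, fun w => rfl⟩, ?_, ?_⟩
    · rintro x y ⟨h1, h2⟩
      exact ⟨ih.symm h1, fun w => (h2 w).symm⟩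
    · rintro x y z ⟨h1, h2⟩ ⟨h3, h4⟩
      exact ⟨ih.trans h1 h3, fun w => (h2 w).trans (h4 w)⟩

lemma crRel_refl (i : ℕ) (u : V) : crRel G i u u := (crRel_equivalence i).refl u

lemma crRel_symm {i : ℕ} {u v : V} (h : crRel G i u v) : crRel G i v u :=
  (crRel_equivalence i).symm h

lemma crRel_trans {i : ℕ} {u v w : V} (h : crRel G i u v) (h' : crRel G i v w) :
    crRel G i u w := (crRel_equivalence i).trans h h'

lemma crRel_succ_sub {i : ℕ} {u v : V} (h : crRel G (i+1) u v) : crRel G i u v := h.1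

lemma crRel_mono {i j : ℕ} (hij : i ≤ j) {u v : V} (h : crRel G j u v) : crRel G i u v := by
  induction j with
  | zero => rcases Nat.le_zero.mp hij with rfl; exact h
  | succ j ih =>
    rcases Nat.eq_or_lt_of_le hij with rfl | hlt
    · exact h
    · exact ih (by omega) h.1

end Basics

section Toolkit

attribute [local instance] Classical.propDecidable

variable {α : Type*} [Fintype α]

/-- The class of `v` under relation `r`, as a `Finset`. -/
noncomputable def clsOf (r : α → α → Prop) (v : α) : Finset α :=
  univ.filter (fun u => r u v)

/-- Number of classes. -/
noncomputable def ncl (r : α → α → Prop) : ℕ :=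
  (univ.image (clsOf r)).card

variable {r r' : α → α → Prop}

lemma mem_clsOf_iff {u v : α} : u ∈ clsOf r v ↔ r u v := by
  simp [clsOf]

lemma mem_clsOf_self (hr : Equivalence r) (v : α) : v ∈ clsOf r v :=
  mem_clsOf_iff.mpr (hr.refl v)

lemma clsOf_eq_of_rel (hr : Equivalence r) {u v : α} (h : r u v) :
    clsOf r u = clsOf r v := by
  ext x
  simp only [mem_clsOf_iff]
  exact ⟨fun hx => hr.trans hx h, fun hx => hr.trans hx (hr.symm h)⟩

lemma clsOf_eq_of_mem (hr : Equivalence r) {u v : α} (h : u ∈ clsOf r v) :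
    clsOf r u = clsOf r v := clsOf_eq_of_rel hr (mem_clsOf_iff.mp h)

lemma clsOf_mem_image (v : α) : clsOf r v ∈ univ.image (clsOf r) :=
  mem_image.mpr ⟨v, mem_univ v, rfl⟩

lemma ncl_pos [Nonempty α] : 1 ≤ ncl r := by
  have : clsOf r (Classical.arbitrary α) ∈ univ.image (clsOf r) := clsOf_mem_image _
  exact Finset.card_pos.mpr ⟨_, this⟩

lemma ncl_le_card : ncl r ≤ Fintype.card α :=
  le_trans Finset.card_image_le (by simp)

/-- auxiliary choice map sending an `r'`-class to the `r`-class of one of its members -/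
noncomputable def clsMap (r : α → α → Prop) (K : Finset α) : Finset α :=
  if h : K.Nonempty then clsOf r h.choose else ∅

lemma clsMap_clsOf (hr : Equivalence r) (hr' : Equivalence r')
    (hsub : ∀ a b, r' a b → r a b) (v : α) :
    clsMap r (clsOf r' v) = clsOf r v := by
  have hne : (clsOf r' v).Nonempty := ⟨v, mem_clsOf_self hr' v⟩
  rw [clsMap, dif_pos hne]
  have hmem : hne.choose ∈ clsOf r' v := hne.choose_spec
  exact clsOf_eq_of_rel hr (hsub _ _ (mem_clsOf_iff.mp hmem))

lemma image_clsMap (hr : Equivalence r) (hr' : Equivalence r')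
    (hsub : ∀ a b, r' a b → r a b) :
    (univ.image (clsOf r')).image (clsMap r) = univ.image (clsOf r) := by
  ext K
  simp only [Finset.mem_image]
  constructor
  · rintro ⟨K', ⟨v, _, rfl⟩, rfl⟩
    exact ⟨v, mem_univ v, (clsMap_clsOf hr hr' hsub v).symm⟩
  · rintro ⟨v, _, rfl⟩
    exact ⟨clsOf r' v, ⟨v, mem_univ v, rfl⟩, clsMap_clsOf hr hr' hsub v⟩

lemma ncl_mono (hr : Equivalence r) (hr' : Equivalence r')
    (hsub : ∀ a b, r' a b → r a b) : ncl r ≤ ncl r' := by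
  rw [ncl, ncl, ← image_clsMap hr hr' hsub]
  exact Finset.card_image_le

lemma rel_le_of_ncl_eq (hr : Equivalence r) (hr' : Equivalence r')
    (hsub : ∀ a b, r' a b → r a b) (hcard : ncl r = ncl r') :
    ∀ a b, r a b → r' a b := by
  intro a b hab
  have hinj : Set.InjOn (clsMap r) (univ.image (clsOf r')) := by
    apply Finset.injOn_of_card_image_eq
    rw [image_clsMap hr hr' hsub]
    exact hcard
  have h1 : clsMap r (clsOf r' a) = clsMap r (clsOf r' b) := by
    rw [clsMap_clsOf hr hr' hsub, clsMap_clsOf hr hr' hsub]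
    exact clsOf_eq_of_rel hr hab
  have h2 : clsOf r' a = clsOf r' b :=
    hinj (by exact_mod_cast clsOf_mem_image a) (by exact_mod_cast clsOf_mem_image b) h1
  exact mem_clsOf_iff.mp (h2 ▸ mem_clsOf_self hr' a)

lemma ncl_lt_of_ne (hr : Equivalence r) (hr' : Equivalence r')
    (hsub : ∀ a b, r' a b → r a b) (hne : ¬ ∀ a b, r a b → r' a b) :
    ncl r < ncl r' := by
  rcases lt_or_eq_of_le (ncl_mono hr hr' hsub) with h | h
  · exact h
  · exact absurd (rel_le_of_ncl_eq hr hr' hsub h) hne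

lemma ncl_eq_one (hr : ∀ a b : α, r a b) [Nonempty α] : ncl r = 1 := by
  have : univ.image (clsOf r) = {univ} := by
    ext K
    simp only [Finset.mem_image, Finset.mem_singleton]
    constructor
    · rintro ⟨v, _, rfl⟩
      ext x; simp [mem_clsOf_iff, hr]
    · rintro rfl
      exact ⟨Classical.arbitrary α, mem_univ _, by ext x; simp [mem_clsOf_iff, hr]⟩
  rw [ncl, this, Finset.card_singleton]

lemma ncl_eq : ncl (fun a b : α => a = b) = Fintype.card α := by
  have : Set.InjOn (clsOf (fun a b : α => a = b)) (univ : Finset α) := by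
    intro a _ b _ h
    have : a ∈ clsOf (fun a b : α => a = b) b := h ▸ mem_clsOf_iff.mpr rfl
    exact mem_clsOf_iff.mp this
  rw [ncl, Finset.card_image_of_injOn this, Finset.card_univ]

lemma discrete_of_ncl_eq_card (hr : Equivalence r) (hcard : ncl r = Fintype.card α) :
    ∀ a b, r a b → a = b := by
  have := rel_le_of_ncl_eq hr ⟨fun _ => rfl, fun h => h.symm, fun h h' => h.trans h'⟩
    (fun a b (h : a = b) => h ▸ hr.refl a) (by rw [hcard, ncl_eq])
  exact this

/-- the classes partition α : sum of class sizes is the whole -/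
lemma sum_card_classes (hr : Equivalence r) :
    ∑ K ∈ univ.image (clsOf r), K.card = Fintype.card α := by
  have hdisj : ∀ K ∈ univ.image (clsOf r), ∀ K' ∈ univ.image (clsOf r), K ≠ K' →
      Disjoint K K' := by
    rintro K hK K' hK' hne
    rcases mem_image.mp hK with ⟨v, _, rfl⟩
    rcases mem_image.mp hK' with ⟨v', _, rfl⟩
    rw [Finset.disjoint_left]
    intro x hx hx'
    exact hne ((clsOf_eq_of_mem hr hx).symm.trans (clsOf_eq_of_mem hr hx'))
  have hcover : (univ.image (clsOf r)).biUnion id = univ := by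
    ext x
    simp only [Finset.mem_biUnion, id]
    exact ⟨fun _ => mem_univ x, fun _ => ⟨clsOf r x, clsOf_mem_image x, mem_clsOf_self hr x⟩⟩
  calc ∑ K ∈ univ.image (clsOf r), K.card
      = ((univ.image (clsOf r)).biUnion id).card := (Finset.card_biUnion hdisj).symm
    _ = Fintype.card α := by rw [hcover, Finset.card_univ]

end Toolkit

section Counts

attribute [local instance] Classical.propDecidable

variable {G : SimpleGraph V}

/-- The neighbour-count of `u` into the `i`-class of `w`. -/
noncomputable def cnt (G : SimpleGraph V) (i : ℕ) (u w : V) : ℕ :=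
  Nat.card {x : V // G.Adj u x ∧ crRel G i x w}

lemma crRel_succ_iff' {i : ℕ} {u v : V} : crRel G (i+1) u v ↔
    (crRel G i u v ∧ ∀ w : V, cnt G i u w = cnt G i v w) := Iff.rfl

lemma cnt_congr {i i' : ℕ} {u w w' : V}
    (h : ∀ x, crRel G i x w ↔ crRel G i' x w') : cnt G i u w = cnt G i' u w' := by
  apply Nat.card_congr
  apply Equiv.subtypeEquivRight
  intro x
  rw [h x]

lemma cnt_eq_filter [Fintype V] {i : ℕ} {u w : V} :
    cnt G i u w = (univ.filter (fun x => G.Adj u x ∧ crRel G i x w)).card := by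
  rw [cnt, Nat.card_eq_fintype_card, Fintype.card_subtype]

lemma cnt_singleton [Fintype V] {i : ℕ} {u w : V}
    (h : ∀ x, crRel G i x w ↔ x = w) :
    cnt G i u w = if G.Adj u w then 1 else 0 := by
  rw [cnt_eq_filter]
  have : (univ.filter (fun x => G.Adj u x ∧ crRel G i x w)) =
      if G.Adj u w then {w} else ∅ := by
    split_ifs with hadj
    · ext x
      simp only [Finset.mem_filter, Finset.mem_singleton, mem_univ, true_and, h x]
      constructor
      · rintro ⟨_, rfl⟩; rfl
      · rintro rfl; exact ⟨hadj, rfl⟩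
    · ext x
      simp only [Finset.mem_filter, Finset.notMem_empty, iff_false, mem_univ, true_and, h x]
      rintro ⟨hax, rfl⟩; exact hadj hax
  rw [this]
  split_ifs <;> simp

lemma cnt_pair [Fintype V] {i : ℕ} {u w a b : V} (hab : a ≠ b)
    (h : ∀ x, crRel G i x w ↔ (x = a ∨ x = b)) :
    cnt G i u w = (if G.Adj u a then 1 else 0) + (if G.Adj u b then 1 else 0) := by
  rw [cnt_eq_filter]
  have : (univ.filter (fun x => G.Adj u x ∧ crRel G i x w)) =
      (if G.Adj u a then {a} else ∅) ∪ (if G.Adj u b then {b} else ∅) := by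
    ext x
    simp only [Finset.mem_filter, mem_univ, true_and, Finset.mem_union, h x]
    constructor
    · rintro ⟨hax, rfl | rfl⟩
      · left; simp [hax]
      · right; simp [hax]
    · intro hx
      rcases hx with hx | hx <;> split_ifs at hx with hadj <;>
        simp only [Finset.mem_singleton, Finset.notMem_empty] at hx
      · subst hx; exact ⟨hadj, Or.inl rfl⟩
      · subst hx; exact ⟨hadj, Or.inr rfl⟩
  rw [this, Finset.card_union_of_disjoint]
  · split_ifs <;> simp
  · split_ifs <;> simp [Finset.disjoint_singleton_right, hab, Ne.symm hab]

end Counts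

section Partitions

variable {G : SimpleGraph V}

lemma crClass_eq_of_rel {i : ℕ} {u v : V} (h : crRel G i u v) :
    crClass G i u = crClass G i v := by
  ext x
  exact ⟨fun hx => crRel_trans hx h, fun hx => crRel_trans hx (crRel_symm h)⟩

lemma crPartition_eq_iff {i j : ℕ} :
    crPartition G i = crPartition G j ↔ ∀ u v, (crRel G i u v ↔ crRel G j u v) := by
  constructor
  · intro hpart u v
    have hv : crClass G i v ∈ crPartition G j := by
      rw [← hpart]; exact ⟨v, rfl⟩
    obtain ⟨w, hw⟩ := hv
    have hvw : crRel G j v w := by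
      have : v ∈ crClass G i v := crRel_refl i v
      rw [hw] at this
      exact this
    have hcl : crClass G j w = crClass G j v := (crClass_eq_of_rel hvw).symm
    have : crClass G i v = crClass G j v := hw.trans hcl
    constructor
    · intro hu
      have : u ∈ crClass G j v := this ▸ hu
      exact this
    · intro hu
      show u ∈ crClass G i v
      rw [this]
      exact hu
  · intro hrel
    have : ∀ v, crClass G i v = crClass G j v := fun v => Set.ext (fun u => hrel u v)
    unfold crPartition
    ext C
    simp only [Set.mem_setOf_eq, this]

end Partitions

section Global

attribute [local instance] Classical.propDecidable

variable [Fintype V] {G : SimpleGraph V}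

/-- Number of colour classes at round `i`. -/
noncomputable def NcG (G : SimpleGraph V) [Fintype V] (i : ℕ) : ℕ := ncl (crRel G i)

lemma crRel_ne_of_lt (hlr : IsLongRefinement G) {i : ℕ} (hi : i < Fintype.card V - 1) :
    ¬ ∀ u v, crRel G i u v → crRel G (i+1) u v := by
  intro hall
  apply hlr.1 i hi
  rw [crPartition_eq_iff]
  exact fun u v => ⟨crRel_succ_sub, hall u v⟩

lemma Nc_lt_succ (hlr : IsLongRefinement G) {i : ℕ} (hi : i < Fintype.card V - 1) :
    NcG G i < NcG G (i+1) :=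
  ncl_lt_of_ne (crRel_equivalence i) (crRel_equivalence (i+1))
    (fun _ _ h => h.1) (crRel_ne_of_lt hlr hi)

lemma Nc_add_le (hlr : IsLongRefinement G) (d i : ℕ) (hd : i + d ≤ Fintype.card V - 1) :
    NcG G i + d ≤ NcG G (i+d) := by
  induction d with
  | zero => simp
  | succ d ih =>
    have h1 : NcG G i + d ≤ NcG G (i+d) := ih (by omega)
    have h2 : NcG G (i+d) < NcG G (i+d+1) := Nc_lt_succ hlr (by omega)
    show NcG G i + (d+1) ≤ NcG G (i+d+1)
    omega

lemma Nc_zero (hn : 2 ≤ Fintype.card V) : NcG G 0 = 1 := by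
  have : Nonempty V := Fintype.card_pos_iff.mp (by omega)
  exact ncl_eq_one (fun _ _ => trivial)

lemma Nc_exact (hlr : IsLongRefinement G) (hn : 2 ≤ Fintype.card V) {i : ℕ}
    (hi : i ≤ Fintype.card V - 1) : NcG G i = i + 1 := by
  have hlow : i + 1 ≤ NcG G i := by
    have := Nc_add_le hlr i 0 (by omega)
    rw [Nc_zero hn] at this
    simpa [Nat.add_comm] using this
  have hup : NcG G i + (Fintype.card V - 1 - i) ≤ NcG G (Fintype.card V - 1) := by
    have := Nc_add_le hlr (Fintype.card V - 1 - i) i (by omega)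
    have he : i + (Fintype.card V - 1 - i) = Fintype.card V - 1 := by omega
    rwa [he] at this
  have hle : NcG G (Fintype.card V - 1) ≤ Fintype.card V := ncl_le_card
  omega

lemma crRel_discrete (hlr : IsLongRefinement G) (hn : 2 ≤ Fintype.card V) :
    ∀ u v, crRel G (Fintype.card V - 1) u v → u = v := by
  apply discrete_of_ncl_eq_card (crRel_equivalence _)
  have := Nc_exact hlr hn (i := Fintype.card V - 1) le_rfl
  rw [NcG] at this
  rw [this]
  omega

lemma cnt_zero_eq (u w : V) : cnt G 0 u w = vdeg G u := by
  apply Nat.card_congr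
  exact Equiv.subtypeEquivRight (fun x => by simp [crRel_zero])

lemma crRel_one_iff [Nonempty V] {u v : V} : crRel G 1 u v ↔ vdeg G u = vdeg G v := by
  rw [show (1:ℕ) = 0 + 1 from rfl, crRel_succ_iff']
  simp only [crRel_zero, true_and, cnt_zero_eq]
  exact ⟨fun h => h (Classical.arbitrary V), fun h _ => h⟩

lemma regular_closed_mono {A : Set V} (hA : ∀ x ∈ A, ∀ y, G.Adj x y → y ∈ A)
    {d : ℕ} (hreg : ∀ x ∈ A, vdeg G x = d) :
    ∀ i, ∀ x ∈ A, ∀ y ∈ A, crRel G i x y := by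
  intro i
  induction i with
  | zero => intro x _ y _; trivial
  | succ i ih =>
    intro x hx y hy
    refine crRel_succ_iff'.mpr ⟨ih x hx y hy, fun w => ?_⟩
    by_cases hc : crRel G i x w
    · have hxw : cnt G i x w = vdeg G x := by
        apply Nat.card_congr
        apply Equiv.subtypeEquivRight
        intro t
        constructor
        · rintro ⟨ht, _⟩; exact ht
        · intro ht
          refine ⟨ht, ?_⟩
          have htA : t ∈ A := hA x hx t ht
          exact crRel_trans (crRel_trans (ih t htA x hx) (crRel_refl i x)) hc
      have hyc : crRel G i y w := crRel_trans (ih y hy x hx) hc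
      have hyw : cnt G i y w = vdeg G y := by
        apply Nat.card_congr
        apply Equiv.subtypeEquivRight
        intro t
        constructor
        · rintro ⟨ht, _⟩; exact ht
        · intro ht
          exact ⟨ht, crRel_trans (ih t (hA y hy t ht) y hy) hyc⟩
      rw [hxw, hyw, hreg x hx, hreg y hy]
    · have hx0 : cnt G i x w = 0 := by
        rw [cnt]
        have : IsEmpty {t : V // G.Adj x t ∧ crRel G i t w} := by
          constructor
          rintro ⟨t, ht, htw⟩
          exact hc (crRel_trans (ih x hx t (hA x hx t ht)) htw)
        exact Nat.card_of_isEmpty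
      have hy0 : cnt G i y w = 0 := by
        rw [cnt]
        have : IsEmpty {t : V // G.Adj y t ∧ crRel G i t w} := by
          constructor
          rintro ⟨t, ht, htw⟩
          exact hc (crRel_trans (crRel_trans (ih x hx y hy) (ih y hy t (hA y hy t ht))) htw)
        exact Nat.card_of_isEmpty
      rw [hx0, hy0]

end Global

set_option linter.unusedSectionVars false

section Trace

attribute [local instance] Classical.propDecidable

variable {G : SimpleGraph V} {A : Set V}

lemma cnt_transfer (hA : ∀ x ∈ A, ∀ y, G.Adj x y → y ∈ A) {i j : ℕ}
    (hij : ∀ x ∈ A, ∀ y ∈ A, (crRel G i x y ↔ crRel G j x y))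
    {x y : V} (hx : x ∈ A) (hy : y ∈ A)
    (hcnt : ∀ w, cnt G i x w = cnt G i y w) :
    ∀ w, cnt G j x w = cnt G j y w := by
  intro w
  by_cases hz : ∃ z, z ∈ A ∧ (G.Adj x z ∨ G.Adj y z) ∧ crRel G j z w
  · obtain ⟨z, hzA, _, hzw⟩ := hz
    have hwz : ∀ t, crRel G j t w ↔ crRel G j t z :=
      fun t => ⟨fun h => crRel_trans h (crRel_symm hzw), fun h => crRel_trans h hzw⟩
    have key : ∀ u, u ∈ A → cnt G j u z = cnt G i u z := by
      intro u hu
      apply Nat.card_congr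
      apply Equiv.subtypeEquivRight
      intro t
      exact and_congr_right (fun ht => (hij t (hA u hu t ht) z hzA).symm)
    calc cnt G j x w = cnt G j x z := cnt_congr hwz
      _ = cnt G i x z := key x hx
      _ = cnt G i y z := hcnt z
      _ = cnt G j y z := (key y hy).symm
      _ = cnt G j y w := (cnt_congr hwz).symm
  · have h0 : ∀ (u : V), u ∈ A → (∀ t, ¬(G.Adj u t ∧ crRel G j t w)) →
        cnt G j u w = 0 := by
      intro u _ hemp
      rw [cnt]
      have : IsEmpty {t : V // G.Adj u t ∧ crRel G j t w} := ⟨fun ⟨t, ht⟩ => hemp t ht⟩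
      exact Nat.card_of_isEmpty
    rw [h0 x hx, h0 y hy]
    · rintro t ⟨ht, htw⟩
      exact hz ⟨t, hA y hy t ht, Or.inr ht, htw⟩
    · rintro t ⟨ht, htw⟩
      exact hz ⟨t, hA x hx t ht, Or.inl ht, htw⟩

lemma autonomy (hA : ∀ x ∈ A, ∀ y, G.Adj x y → y ∈ A) {i j : ℕ}
    (hij : ∀ x ∈ A, ∀ y ∈ A, (crRel G i x y ↔ crRel G j x y)) :
    ∀ x ∈ A, ∀ y ∈ A, (crRel G (i+1) x y ↔ crRel G (j+1) x y) := by
  intro x hx y hy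
  rw [crRel_succ_iff', crRel_succ_iff']
  apply and_congr (hij x hx y hy)
  constructor
  · exact fun h => cnt_transfer hA hij hx hy h
  · exact fun h => cnt_transfer hA (fun a ha b hb => (hij a ha b hb).symm) hx hy h

lemma stall (hA : ∀ x ∈ A, ∀ y, G.Adj x y → y ∈ A) {i : ℕ}
    (hst : ∀ x ∈ A, ∀ y ∈ A, (crRel G (i+1) x y ↔ crRel G i x y)) :
    ∀ k, i ≤ k → ∀ x ∈ A, ∀ y ∈ A, (crRel G k x y ↔ crRel G i x y) := by
  intro k
  induction k with
  | zero =>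
    intro hk x hx y hy
    rcases Nat.le_zero.mp hk with rfl
    exact Iff.rfl
  | succ k ih =>
    intro hk x hx y hy
    rcases Nat.eq_or_lt_of_le hk with rfl | hlt
    · exact Iff.rfl
    · have hik : i ≤ k := by omega
      have h1 := autonomy hA (fun a ha b hb => ih hik a ha b hb)
      exact (h1 x hx y hy).trans (hst x hx y hy)

lemma trace_discrete [Fintype V] (hlr : IsLongRefinement G) (hn : 2 ≤ Fintype.card V)
    (hA : ∀ x ∈ A, ∀ y, G.Adj x y → y ∈ A) (hAne : A.Nonempty) :
    ∀ x ∈ A, ∀ y ∈ A, crRel G (A.ncard - 1) x y → x = y := by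
  have hncard : A.ncard = Fintype.card ↥A := by
    rw [← Nat.card_coe_set_eq, Nat.card_eq_fintype_card]
  rw [hncard]
  set n := Fintype.card V with hn_def
  have hcard_le : Fintype.card ↥A ≤ n := Fintype.card_subtype_le _
  have hAnonempty : Nonempty ↥A := hAne.to_subtype
  set tr : ℕ → ↥A → ↥A → Prop := fun i p q => crRel G i p.1 q.1 with htr
  have htreq : ∀ i, Equivalence (tr i) := by
    intro i
    exact ⟨fun p => crRel_refl i p.1, fun h => crRel_symm h, fun h h' => crRel_trans h h'⟩
  have claim : ∀ k, k ≤ n - 1 → (∀ p q : ↥A, tr k p q → p = q) ∨ (k + 1 ≤ ncl (tr k)) := by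
    intro k
    induction k with
    | zero => intro _; right; exact ncl_pos
    | succ k ih =>
      intro hk
      rcases ih (by omega) with hdisc | hncl
      · left
        exact fun p q hpq => hdisc p q (crRel_succ_sub hpq)
      · by_cases hstal : ∀ p q : ↥A, tr (k+1) p q ↔ tr k p q
        · left
          have hst' : ∀ x ∈ A, ∀ y ∈ A, (crRel G (k+1) x y ↔ crRel G k x y) := by
            intro x hx y hy
            exact hstal ⟨x, hx⟩ ⟨y, hy⟩
          have hfin := stall hA hst' (n-1) (by omega)
          intro p q hpq
          have : crRel G (n-1) p.1 q.1 := by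
            rw [hfin p.1 p.2 q.1 q.2]
            exact crRel_succ_sub hpq
          exact Subtype.ext (crRel_discrete hlr hn p.1 q.1 this)
        · right
          have hlt : ncl (tr k) < ncl (tr (k+1)) := by
            apply ncl_lt_of_ne (htreq k) (htreq (k+1)) (fun p q h => crRel_succ_sub h)
            intro hall
            exact hstal (fun p q => ⟨fun h => crRel_succ_sub h, fun h => hall p q h⟩)
          omega
  rcases claim (Fintype.card ↥A - 1) (by omega) with hdisc | hncl
  · intro x hx y hy hxy
    have := hdisc ⟨x, hx⟩ ⟨y, hy⟩ hxy
    exact congrArg Subtype.val this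
  · have h1 : ncl (tr (Fintype.card ↥A - 1)) ≤ Fintype.card ↥A := ncl_le_card
    have h2 : Fintype.card ↥A - 1 + 1 = Fintype.card ↥A := by
      have : 0 < Fintype.card ↥A := Fintype.card_pos_iff.mpr hAnonempty
      omega
    have h3 : ncl (tr (Fintype.card ↥A - 1)) = Fintype.card ↥A := by omega
    have hd := discrete_of_ncl_eq_card (htreq _) h3
    intro x hx y hy hxy
    exact congrArg Subtype.val (hd ⟨x, hx⟩ ⟨y, hy⟩ hxy)

end Trace

section Aut

variable {G : SimpleGraph V}

lemma cnt_aut (σ : V ≃ V) (hσ : ∀ x y, G.Adj (σ x) (σ y) ↔ G.Adj x y) {i : ℕ}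
    (ih : ∀ u v, (crRel G i (σ u) (σ v) ↔ crRel G i u v)) (u w : V) :
    cnt G i (σ u) w = cnt G i u (σ.symm w) := by
  apply Nat.card_congr
  apply Equiv.subtypeEquiv σ.symm
  intro x
  apply and_congr
  · constructor
    · intro h
      rw [← hσ u (σ.symm x)]
      simpa using h
    · intro h
      have := (hσ u (σ.symm x)).mpr h
      simpa using this
  · constructor
    · intro h
      rw [← ih (σ.symm x) (σ.symm w)]
      simpa using h
    · intro h
      have := (ih (σ.symm x) (σ.symm w)).mpr h
      simpa using this

lemma crRel_aut (σ : V ≃ V) (hσ : ∀ x y, G.Adj (σ x) (σ y) ↔ G.Adj x y) :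
    ∀ i u v, (crRel G i (σ u) (σ v) ↔ crRel G i u v) := by
  intro i
  induction i with
  | zero => intro u v; simp [crRel_zero]
  | succ i ih =>
    intro u v
    rw [crRel_succ_iff', crRel_succ_iff']
    apply and_congr (ih u v)
    constructor
    · intro h w
      have := h (σ w)
      rw [cnt_aut σ hσ ih u (σ w), cnt_aut σ hσ ih v (σ w)] at this
      simpa using this
    · intro h w
      rw [cnt_aut σ hσ ih u w, cnt_aut σ hσ ih v w]
      exact h (σ.symm w)

lemma crRel_aut_fix (σ : V ≃ V) (hσ : ∀ x y, G.Adj (σ x) (σ y) ↔ G.Adj x y) :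
    ∀ i u, crRel G i u (σ u) := by
  intro i
  induction i with
  | zero => intro u; trivial
  | succ i ih =>
    intro u
    refine crRel_succ_iff'.mpr ⟨ih u, fun w => ?_⟩
    have h1 : cnt G i (σ u) w = cnt G i u (σ.symm w) :=
      cnt_aut σ hσ (crRel_aut σ hσ i) u w
    have h2 : ∀ x, crRel G i x (σ.symm w) ↔ crRel G i x w := by
      intro x
      have hfix : crRel G i (σ.symm w) w := by
        have := ih (σ.symm w)
        simpa using this
      exact ⟨fun h => crRel_trans h hfix, fun h => crRel_trans h (crRel_symm hfix)⟩
    rw [h1, cnt_congr h2]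

end Aut

section MainCase

attribute [local instance] Classical.propDecidable

variable [Fintype V] {G : SimpleGraph V} {A : Set V}

lemma clsOf_mono {i j : ℕ} (hij : i ≤ j) (v : V) :
    clsOf (crRel G j) v ⊆ clsOf (crRel G i) v := by
  intro x hx
  exact mem_clsOf_iff.mpr (crRel_mono hij (mem_clsOf_iff.mp hx))

lemma cls_card_le_two {i : ℕ}
    (hd : ∀ x ∈ A, ∀ y ∈ A, crRel G i x y → x = y)
    (hd' : ∀ x, x ∉ A → ∀ y, y ∉ A → crRel G i x y → x = y) (v : V) :
    (clsOf (crRel G i) v).card ≤ 2 := by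
  by_contra hcon
  push_neg at hcon
  obtain ⟨a, ha, b, hb, c, hc, hab, hac, hbc⟩ := Finset.two_lt_card.mp hcon
  have hsame : ∀ p q, p ∈ clsOf (crRel G i) v → q ∈ clsOf (crRel G i) v →
      ((p ∈ A) ↔ (q ∈ A)) → p = q := by
    intro p q hp hq hiff
    have hpq : crRel G i p q :=
      crRel_trans (mem_clsOf_iff.mp hp) (crRel_symm (mem_clsOf_iff.mp hq))
    by_cases hpA : p ∈ A
    · exact hd p hpA q (hiff.mp hpA) hpq
    · exact hd' p hpA q (fun hq' => hpA (hiff.mpr hq')) hpq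
  have pig : ((a ∈ A) ↔ (b ∈ A)) ∨ ((a ∈ A) ↔ (c ∈ A)) ∨ ((b ∈ A) ↔ (c ∈ A)) := by
    tauto
  rcases pig with hp | hp | hp
  · exact hab (hsame a b ha hb hp)
  · exact hac (hsame a c ha hc hp)
  · exact hbc (hsame b c hb hc hp)

lemma pairs_count (hlr : IsLongRefinement G) (hn : 2 ≤ Fintype.card V) {i : ℕ}
    (hi : i ≤ Fintype.card V - 1)
    (hle2 : ∀ v, (clsOf (crRel G i) v).card ≤ 2) :
    ((univ.image (clsOf (crRel G i))).filter (fun K => K.card = 2)).card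
      = Fintype.card V - 1 - i := by
  set Pi := univ.image (clsOf (crRel G i)) with hPi
  have hsum : ∑ K ∈ Pi, K.card = Fintype.card V := sum_card_classes (crRel_equivalence i)
  have hbounds : ∀ K ∈ Pi, 1 ≤ K.card ∧ K.card ≤ 2 := by
    intro K hK
    obtain ⟨v, _, rfl⟩ := mem_image.mp hK
    exact ⟨Finset.card_pos.mpr ⟨v, mem_clsOf_self (crRel_equivalence i) v⟩, hle2 v⟩
  have hNc : Pi.card = i + 1 := Nc_exact hlr hn hi
  have hsplit : ∀ K ∈ Pi, K.card = 1 + (if K.card = 2 then 1 else 0) := by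
    intro K hK
    have := hbounds K hK
    by_cases h2 : K.card = 2
    · simp [h2]
    · have : K.card = 1 := by omega
      simp [this, h2]
  have h1 : ∑ K ∈ Pi, K.card = Pi.card + ∑ K ∈ Pi, (if K.card = 2 then 1 else 0) := by
    rw [Finset.sum_congr rfl hsplit, Finset.sum_add_distrib]
    simp
  have h2 : (Pi.filter (fun K => K.card = 2)).card
      = ∑ K ∈ Pi, (if K.card = 2 then 1 else 0) := Finset.card_filter _ _
  omega

lemma pairs_subset {i : ℕ}
    (hle2 : ∀ v, (clsOf (crRel G i) v).card ≤ 2) :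
    (univ.image (clsOf (crRel G (i+1)))).filter (fun K => K.card = 2) ⊆
    (univ.image (clsOf (crRel G i))).filter (fun K => K.card = 2) := by
  intro K hK
  rw [Finset.mem_filter] at hK
  obtain ⟨hKP, hK2⟩ := hK
  obtain ⟨x, y, hxy, rfl⟩ := Finset.card_eq_two.mp hK2
  obtain ⟨v, _, hv⟩ := mem_image.mp hKP
  have hxv : x ∈ clsOf (crRel G (i+1)) v := by rw [hv]; simp
  have hyv : y ∈ clsOf (crRel G (i+1)) v := by rw [hv]; simp
  have hxyrel : crRel G (i+1) x y :=
    crRel_trans (mem_clsOf_iff.mp hxv) (crRel_symm (mem_clsOf_iff.mp hyv))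
  have hsub : ({x, y} : Finset V) ⊆ clsOf (crRel G i) x := by
    intro z hz
    rcases Finset.mem_insert.mp hz with rfl | hz
    · exact mem_clsOf_self (crRel_equivalence i) z
    · rw [Finset.mem_singleton] at hz
      subst hz
      exact mem_clsOf_iff.mpr (crRel_symm (crRel_succ_sub hxyrel))
  have heq : ({x, y} : Finset V) = clsOf (crRel G i) x := by
    apply Finset.eq_of_subset_of_card_le hsub
    rw [Finset.card_insert_of_notMem (by simpa using hxy), Finset.card_singleton]
    exact hle2 x
  rw [Finset.mem_filter, heq]
  exact ⟨clsOf_mem_image x, by rw [← heq, Finset.card_insert_of_notMem (by simpa using hxy), Finset.card_singleton]⟩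

end MainCase

section MainCase2

attribute [local instance] Classical.propDecidable

variable [Fintype V] {G : SimpleGraph V} {A : Set V}

lemma main_case (hlr : IsLongRefinement G) (hn : 2 ≤ Fintype.card V)
    (hA : ∀ x ∈ A, ∀ y, G.Adj x y → y ∈ A)
    (hA2 : 2 ≤ A.ncard)
    (hmin : A.ncard ≤ (Aᶜ : Set V).ncard) : False := by
  haveI hVne : Nonempty V := Fintype.card_pos_iff.mp (by omega)
  have hAne : A.Nonempty := by
    rw [← Set.ncard_pos (Set.toFinite A)]; omega
  have hBne : (Aᶜ : Set V).Nonempty := by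
    rw [← Set.ncard_pos (Set.toFinite _)]; omega
  have hAc : ∀ x, x ∉ A → ∀ y, G.Adj x y → y ∉ A :=
    fun x hx y hxy hyA => hx (hA y hyA x hxy.symm)
  have hcross : ∀ x, x ∈ A → ∀ y, y ∉ A → ¬ G.Adj x y :=
    fun x hx y hy hadj => hy (hA x hx y hadj)
  have hdA0 := trace_discrete hlr hn hA hAne
  have hdB0 := trace_discrete hlr hn
    (fun x hx y hxy => Set.mem_compl (hAc x (Set.notMem_of_mem_compl hx) y hxy)) hBne
  have habn0 : A.ncard + (Aᶜ : Set V).ncard = Fintype.card V := by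
    rw [Set.ncard_add_ncard_compl A (Set.toFinite _) (Set.toFinite _),
      Nat.card_eq_fintype_card]
  obtain ⟨a, hadef⟩ : ∃ m, A.ncard = m := ⟨_, rfl⟩
  obtain ⟨b, hbdef⟩ : ∃ m, (Aᶜ : Set V).ncard = m := ⟨_, rfl⟩
  rw [hadef] at hdA0 hA2 hmin habn0
  rw [hbdef] at hdB0 hmin habn0
  have hs2 : 2 ≤ a := hA2
  have hb2 : 2 ≤ b := le_trans hA2 hmin
  obtain ⟨T, hTdef⟩ : ∃ T, b = T + 1 := ⟨b - 1, by omega⟩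
  set s := a with hsdef
  have hTs : T + s = Fintype.card V - 1 := by omega
  have hd : ∀ i, T ≤ i → ∀ x ∈ A, ∀ y ∈ A, crRel G i x y → x = y := by
    intro i hi x hx y hy hxy
    exact hdA0 x hx y hy (crRel_mono (by omega) hxy)
  have hd' : ∀ i, T ≤ i → ∀ x, x ∉ A → ∀ y, y ∉ A → crRel G i x y → x = y := by
    intro i hi x hx y hy hxy
    exact hdB0 x (Set.mem_compl hx) y (Set.mem_compl hy) (crRel_mono (by omega) hxy)
  have hle2 : ∀ i, T ≤ i → ∀ v, (clsOf (crRel G i) v).card ≤ 2 :=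
    fun i hi v => cls_card_le_two (hd i hi) (hd' i hi) v
  -- pairs
  set pairs : ℕ → Finset (Finset V) :=
    fun i => (univ.image (clsOf (crRel G i))).filter (fun K => K.card = 2) with hpairsdef
  have hpc : ∀ i, T ≤ i → i ≤ Fintype.card V - 1 → (pairs i).card = Fintype.card V - 1 - i :=
    fun i hi hi' => pairs_count hlr hn hi' (hle2 i hi)
  have hps : ∀ i, T ≤ i → pairs (i+1) ⊆ pairs i :=
    fun i hi => pairs_subset (hle2 i hi)
  have hQ : ∀ j, j < s → ((pairs (T+j)) \ (pairs (T+j+1))).card = 1 := by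
    intro j hj
    rw [Finset.card_sdiff_of_subset (hps (T+j) (by omega)), hpc (T+j) (by omega) (by omega),
      hpc (T+j+1) (by omega) (by omega)]
    omega
  -- the split pair at each round
  have hexists : ∀ j : ℕ, ∃ p : V × V, j < s →
      p.1 ∈ A ∧ p.2 ∉ A ∧
      crRel G (T+j) p.1 p.2 ∧ ¬ crRel G (T+j+1) p.1 p.2 ∧
      (∀ x, crRel G (T+j) x p.1 ↔ (x = p.1 ∨ x = p.2)) ∧
      (∀ K ∈ pairs (T+j), K ∉ pairs (T+j+1) → K = {p.1, p.2}) ∧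
      (∀ x, crRel G (T+j+1) x p.1 → x = p.1) ∧
      (∀ x, crRel G (T+j+1) x p.2 → x = p.2) := by
    intro j
    by_cases hj : j < s
    swap
    · exact ⟨(Classical.arbitrary V, Classical.arbitrary V), fun h => absurd h hj⟩
    obtain ⟨K, hK⟩ := Finset.card_eq_one.mp (hQ j hj)
    have hKmem : K ∈ pairs (T+j) \ pairs (T+j+1) := by rw [hK]; exact Finset.mem_singleton_self K
    rw [Finset.mem_sdiff] at hKmem
    obtain ⟨hKin, hKout⟩ := hKmem
    rw [hpairsdef] at hKin
    simp only [Finset.mem_filter] at hKin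
    obtain ⟨hKP, hK2⟩ := hKin
    obtain ⟨x, y, hxy, hKxy⟩ := Finset.card_eq_two.mp hK2
    obtain ⟨z, _, hz⟩ := mem_image.mp hKP
    have hclsx : clsOf (crRel G (T+j)) x = K := by
      rw [← hz]
      apply clsOf_eq_of_mem (crRel_equivalence (T+j))
      rw [hz, hKxy]; simp
    have hclsy : clsOf (crRel G (T+j)) y = K := by
      rw [← hz]
      apply clsOf_eq_of_mem (crRel_equivalence (T+j))
      rw [hz, hKxy]; simp
    have hrelxy : crRel G (T+j) x y := by
      have : x ∈ clsOf (crRel G (T+j)) y := by rw [hclsy, hKxy]; simp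
      exact mem_clsOf_iff.mp this
    -- a symmetric helper
    have mk : ∀ x' y' : V, x' ∈ A → y' ∉ A → x' ≠ y' → crRel G (T+j) x' y' →
        clsOf (crRel G (T+j)) x' = K → K = {x', y'} →
        ∃ p : V × V, p.1 ∈ A ∧ p.2 ∉ A ∧
        crRel G (T+j) p.1 p.2 ∧ ¬ crRel G (T+j+1) p.1 p.2 ∧
        (∀ x, crRel G (T+j) x p.1 ↔ (x = p.1 ∨ x = p.2)) ∧
        (∀ K' ∈ pairs (T+j), K' ∉ pairs (T+j+1) → K' = {p.1, p.2}) ∧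
        (∀ x, crRel G (T+j+1) x p.1 → x = p.1) ∧
        (∀ x, crRel G (T+j+1) x p.2 → x = p.2) := by
      intro x' y' hxA hyA hne hrel hcls hKeq
      have hclsy' : clsOf (crRel G (T+j)) y' = K := by
        rw [← hcls]
        exact (clsOf_eq_of_rel (crRel_equivalence (T+j)) (crRel_symm hrel))
      have hmemiff : ∀ t, crRel G (T+j) t x' ↔ (t = x' ∨ t = y') := by
        intro t
        rw [← mem_clsOf_iff (r := crRel G (T+j)), hcls, hKeq]
        simp
      have hnotrel : ¬ crRel G (T+j+1) x' y' := by
        intro hcon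
        apply hKout
        have hsub1 : K ⊆ clsOf (crRel G (T+j+1)) x' := by
          rw [hKeq]
          intro t ht
          rcases Finset.mem_insert.mp ht with rfl | ht
          · exact mem_clsOf_self (crRel_equivalence _) t
          · rw [Finset.mem_singleton] at ht
            subst ht
            exact mem_clsOf_iff.mpr (crRel_symm hcon)
        have hsub2 : clsOf (crRel G (T+j+1)) x' ⊆ K := by
          rw [← hcls]
          exact clsOf_mono (by omega) x'
        have : clsOf (crRel G (T+j+1)) x' = K := le_antisymm hsub2 hsub1
        rw [hpairsdef]
        simp only [Finset.mem_filter]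
        exact ⟨this ▸ clsOf_mem_image x', hK2⟩
      refine ⟨(x', y'), hxA, hyA, hrel, hnotrel, hmemiff, ?_, ?_, ?_⟩
      · intro K' hK'in hK'out
        have : K' ∈ pairs (T+j) \ pairs (T+j+1) := Finset.mem_sdiff.mpr ⟨hK'in, hK'out⟩
        rw [hK, Finset.mem_singleton] at this
        rw [this, hKeq]
      · intro t ht
        have : t ∈ clsOf (crRel G (T+j)) x' :=
          clsOf_mono (by omega) x' (mem_clsOf_iff.mpr ht)
        rw [hcls, hKeq] at this
        rcases Finset.mem_insert.mp this with rfl | h1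
        · rfl
        · rw [Finset.mem_singleton] at h1
          subst h1
          exact absurd (crRel_symm ht) hnotrel
      · intro t ht
        have : t ∈ clsOf (crRel G (T+j)) y' :=
          clsOf_mono (by omega) y' (mem_clsOf_iff.mpr ht)
        rw [hclsy', hKeq] at this
        rcases Finset.mem_insert.mp this with rfl | h1
        · exact absurd ht hnotrel
        · rw [Finset.mem_singleton] at h1
          exact h1
    -- which side is which
    by_cases hxA : x ∈ A
    · have hyA : y ∉ A := fun hyA => hxy (hd (T+j) (by omega) x hxA y hyA hrelxy)
      obtain ⟨p, hp⟩ := mk x y hxA hyA hxy hrelxy hclsx hKxy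
      exact ⟨p, fun _ => hp⟩
    · have hyA : y ∈ A := by
        by_contra hyA
        exact hxy (hd' (T+j) (by omega) x hxA y hyA hrelxy)
      obtain ⟨p, hp⟩ := mk y x hyA hxA (Ne.symm hxy) (crRel_symm hrelxy) hclsy
        (hKxy.trans (Finset.pair_comm x y))
      exact ⟨p, fun _ => hp⟩
  choose uv huv using hexists
  set u : ℕ → V := fun j => (uv j).1 with hudef
  set v : ℕ → V := fun j => (uv j).2 with hvdef
  have hu_A : ∀ j, j < s → u j ∈ A := fun j hj => (huv j hj).1
  have hv_nA : ∀ j, j < s → v j ∉ A := fun j hj => (huv j hj).2.1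
  have hrel : ∀ j, j < s → crRel G (T+j) (u j) (v j) := fun j hj => (huv j hj).2.2.1
  have hnot : ∀ j, j < s → ¬ crRel G (T+j+1) (u j) (v j) := fun j hj => (huv j hj).2.2.2.1
  have hclsP : ∀ j, j < s → ∀ x, crRel G (T+j) x (u j) ↔ (x = u j ∨ x = v j) :=
    fun j hj => (huv j hj).2.2.2.2.1
  have huniqK : ∀ j, j < s → ∀ K ∈ pairs (T+j), K ∉ pairs (T+j+1) → K = {u j, v j} :=
    fun j hj => (huv j hj).2.2.2.2.2.1
  have hsingu : ∀ j, j < s → ∀ x, crRel G (T+j+1) x (u j) → x = u j :=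
    fun j hj => (huv j hj).2.2.2.2.2.2.1
  have hsingv : ∀ j, j < s → ∀ x, crRel G (T+j+1) x (v j) → x = v j :=
    fun j hj => (huv j hj).2.2.2.2.2.2.2
  -- basic distinctness
  have hujv_ne : ∀ j, j < s → u j ≠ v j := by
    intro j hj he
    exact hv_nA j hj (he ▸ hu_A j hj)
  have hsingu_iff : ∀ j, j < s → ∀ x, crRel G (T+j+1) x (u j) ↔ x = u j := by
    intro j hj x
    exact ⟨hsingu j hj x, by rintro rfl; exact crRel_refl _ _⟩
  have hsingv_iff : ∀ j, j < s → ∀ x, crRel G (T+j+1) x (v j) ↔ x = v j := by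
    intro j hj x
    exact ⟨hsingv j hj x, by rintro rfl; exact crRel_refl _ _⟩
  have hsingu_pers : ∀ j, j < s → ∀ i, T+j+1 ≤ i → ∀ x, crRel G i x (u j) ↔ x = u j := by
    intro j hj i hi x
    constructor
    · intro h; exact hsingu j hj x (crRel_mono hi h)
    · rintro rfl; exact crRel_refl _ _
  have ukey : ∀ j l, j < s → l < s → j < l → u j = u l → False := by
    intro j l hj hl hjl he
    have h1 : crRel G (T+j+1) (v l) (u l) :=
      crRel_symm (crRel_mono (by omega) (hrel l hl))
    rw [← he] at h1
    have h2 := hsingu j hj (v l) h1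
    apply hv_nA l hl
    rw [h2, he]
    exact hu_A l hl
  have uinj : ∀ j l, j < s → l < s → u j = u l → j = l := by
    intro j l hj hl he
    rcases lt_trichotomy j l with h | h | h
    · exact absurd he (fun he' => ukey j l hj hl h he')
    · exact h
    · exact absurd he.symm (fun he' => ukey l j hl hj h he')
  -- the chain : consecutive pairs are adjacent
  have halpha : ∀ j, j + 1 < s → G.Adj (u (j+1)) (u j) := by
    intro j hj1
    have hj : j < s := by omega
    have hrel1' : crRel G (T+j+1) (u (j+1)) (v (j+1)) := by
      have he : T+(j+1) = T+j+1 := by omega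
      have := hrel (j+1) hj1
      rwa [he] at this
    have hnot1 : ¬ crRel G (T+j+1+1) (u (j+1)) (v (j+1)) := by
      have he : T+(j+1)+1 = T+j+1+1 := by omega
      have := hnot (j+1) hj1
      rwa [he] at this
    have hw : ∃ w, cnt G (T+j+1) (u (j+1)) w ≠ cnt G (T+j+1) (v (j+1)) w := by
      by_contra hcon
      push_neg at hcon
      exact hnot1 (crRel_succ_iff'.mpr ⟨hrel1', hcon⟩)
    obtain ⟨w, hwne⟩ := hw
    have hcnteq := (crRel_succ_iff'.mp hrel1').2
    have hwQ : w = u j ∨ w = v j := by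
      by_contra hcon
      push_neg at hcon
      obtain ⟨hwu, hwv⟩ := hcon
      have hiff : ∀ x, crRel G (T+j+1) x w ↔ crRel G (T+j) x w := by
        by_cases hsing : ∀ x, crRel G (T+j) x w → x = w
        · intro x
          constructor
          · intro h; exact crRel_mono (by omega) h
          · intro h
            have hxw := hsing x h
            subst hxw
            exact crRel_refl _ _
        · push_neg at hsing
          obtain ⟨x0, hx0rel, hx0ne⟩ := hsing
          have hwx0 : w ∉ ({x0} : Finset V) := by simpa using (Ne.symm hx0ne)
          have hsubp : ({w, x0} : Finset V) ⊆ clsOf (crRel G (T+j)) w := by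
            intro t ht
            rcases Finset.mem_insert.mp ht with rfl | ht
            · exact mem_clsOf_self (crRel_equivalence _) t
            · rw [Finset.mem_singleton] at ht; subst ht
              exact mem_clsOf_iff.mpr hx0rel
          have hcard2' : ({w, x0} : Finset V).card = 2 := by
            rw [Finset.card_insert_of_notMem hwx0, Finset.card_singleton]
          have hKeq : clsOf (crRel G (T+j)) w = {w, x0} := by
            refine (Finset.eq_of_subset_of_card_le hsubp ?_).symm
            rw [hcard2']
            exact hle2 (T+j) (by omega) w
          have hKpairs : ({w, x0} : Finset V) ∈ pairs (T+j) := by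
            simp only [hpairsdef, Finset.mem_filter]
            exact ⟨hKeq ▸ clsOf_mem_image w, hcard2'⟩
          have hKpairs1 : ({w, x0} : Finset V) ∈ pairs (T+j+1) := by
            by_contra hout
            have heq2 := huniqK j hj _ hKpairs hout
            have hwmem : w ∈ ({u j, v j} : Finset V) := by rw [← heq2]; simp
            rcases Finset.mem_insert.mp hwmem with h | h
            · exact hwu h
            · rw [Finset.mem_singleton] at h; exact hwv h
          have hx0rel1 : crRel G (T+j+1) x0 w := by
            simp only [hpairsdef, Finset.mem_filter] at hKpairs1
            obtain ⟨hmem, _⟩ := hKpairs1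
            obtain ⟨z, _, hz⟩ := mem_image.mp hmem
            have hwz : w ∈ clsOf (crRel G (T+j+1)) z := by rw [hz]; simp
            have hclw : clsOf (crRel G (T+j+1)) w = {w, x0} := by
              rw [← hz]
              exact clsOf_eq_of_mem (crRel_equivalence _) hwz
            have : x0 ∈ clsOf (crRel G (T+j+1)) w := by rw [hclw]; simp
            exact mem_clsOf_iff.mp this
          intro x
          constructor
          · intro h; exact crRel_mono (by omega) h
          · intro h
            have hx : x ∈ clsOf (crRel G (T+j)) w := mem_clsOf_iff.mpr h
            rw [hKeq] at hx
            rcases Finset.mem_insert.mp hx with rfl | hx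
            · exact crRel_refl _ _
            · rw [Finset.mem_singleton] at hx; subst hx
              exact hx0rel1
      apply hwne
      calc cnt G (T+j+1) (u (j+1)) w = cnt G (T+j) (u (j+1)) w := cnt_congr hiff
        _ = cnt G (T+j) (v (j+1)) w := hcnteq w
        _ = cnt G (T+j+1) (v (j+1)) w := (cnt_congr hiff).symm
    have hsum := hcnteq (u j)
    rw [cnt_pair (hujv_ne j hj) (hclsP j hj), cnt_pair (hujv_ne j hj) (hclsP j hj)] at hsum
    have hc1 : ¬ G.Adj (u (j+1)) (v j) := hcross _ (hu_A (j+1) hj1) _ (hv_nA j hj)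
    have hc2 : ¬ G.Adj (v (j+1)) (u j) := by
      intro hadj
      exact hv_nA (j+1) hj1 (hA _ (hu_A j hj) _ hadj.symm)
    rcases hwQ with rfl | rfl
    · rw [cnt_singleton (hsingu_iff j hj), cnt_singleton (hsingu_iff j hj)] at hwne
      rw [if_neg hc2] at hwne
      by_contra hadj
      rw [if_neg hadj] at hwne
      exact hwne rfl
    · rw [cnt_singleton (hsingv_iff j hj), cnt_singleton (hsingv_iff j hj)] at hwne
      rw [if_neg hc1] at hwne
      have hvadj : G.Adj (v (j+1)) (v j) := by
        by_contra hvn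
        rw [if_neg hvn] at hwne
        exact hwne rfl
      rw [if_neg hc1, if_neg hc2, if_pos hvadj] at hsum
      by_contra hadj
      rw [if_neg hadj] at hsum
      simp at hsum
  -- no chords
  have hbeta : ∀ j l, l + 2 ≤ j → j < s → ¬ G.Adj (u j) (u l) := by
    intro j l hlj hj
    have hl : l < s := by omega
    have hmono : crRel G (T+l+1+1) (u j) (v j) := crRel_mono (by omega) (hrel j hj)
    have h2 := (crRel_succ_iff'.mp hmono).2 (u l)
    rw [cnt_singleton (hsingu_pers l hl (T+l+1) le_rfl),
      cnt_singleton (hsingu_pers l hl (T+l+1) le_rfl)] at h2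
    have hc : ¬ G.Adj (v j) (u l) := by
      intro hadj
      exact hv_nA j hj (hA _ (hu_A l hl) _ hadj.symm)
    rw [if_neg hc] at h2
    intro hadj
    rw [if_pos hadj] at h2
    simp at h2
  -- the chain covers all of A
  have himg_card : ((Finset.range s).image u).card = s := by
    rw [Finset.card_image_of_injOn, Finset.card_range]
    intro j hj l hl he
    exact uinj j l (by simpa using hj) (by simpa using hl) he
  have hsubA : (Finset.range s).image u ⊆ A.toFinset := by
    intro x hx
    obtain ⟨j, hj, rfl⟩ := Finset.mem_image.mp hx
    rw [Set.mem_toFinset]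
    exact hu_A j (by simpa using hj)
  have hAtf : A.toFinset.card = s := by
    rw [Set.toFinset_card, ← Nat.card_eq_fintype_card, Nat.card_coe_set_eq, hadef]
  have hAfin : (Finset.range s).image u = A.toFinset :=
    Finset.eq_of_subset_of_card_le hsubA (by omega)
  have hmemA : ∀ x, x ∈ A ↔ ∃ j, j < s ∧ u j = x := by
    intro x
    rw [← Set.mem_toFinset, ← hAfin]
    simp [Finset.mem_image]
  -- adjacency is exactly consecutive
  have hAdjIff : ∀ j l, j < s → l < s → (G.Adj (u j) (u l) ↔ (j = l + 1 ∨ l = j + 1)) := by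
    intro j l hj hl
    constructor
    · intro hadj
      by_contra hcon
      push_neg at hcon
      obtain ⟨h1, h2⟩ := hcon
      rcases lt_trichotomy j l with h | h | h
      · exact hbeta l j (by omega) hl hadj.symm
      · subst h; exact G.loopless.irrefl _ hadj
      · exact hbeta j l (by omega) hj hadj
    · intro hcon
      rcases hcon with rfl | rfl
      · exact halpha l (by omega)
      · exact (halpha j (by omega)).symm
  -- the reflection automorphism
  set g : V → V := fun x => if hx : ∃ j, j < s ∧ u j = x then u (s - 1 - Classical.choose hx) else x with hgdef
  have hg_u : ∀ j, j < s → g (u j) = u (s - 1 - j) := by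
    intro j hj
    have hex : ∃ l, l < s ∧ u l = u j := ⟨j, hj, rfl⟩
    have hspec := Classical.choose_spec hex
    have hch : Classical.choose hex = j := uinj _ _ hspec.1 hj hspec.2
    show (if hx : ∃ l, l < s ∧ u l = u j then u (s - 1 - Classical.choose hx) else u j) = u (s - 1 - j)
    rw [dif_pos hex, hch]
  have hg_not : ∀ x, ¬ (∃ j, j < s ∧ u j = x) → g x = x := by
    intro x hx
    show (if hx : ∃ j, j < s ∧ u j = x then u (s - 1 - Classical.choose hx) else x) = x
    rw [dif_neg hx]
  have hgg : ∀ x, g (g x) = x := by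
    intro x
    by_cases hx : ∃ j, j < s ∧ u j = x
    · obtain ⟨j, hj, rfl⟩ := hx
      rw [hg_u j hj, hg_u (s-1-j) (by omega)]
      congr 1
      omega
    · have h1 : g x = x := hg_not x hx
      rw [h1, h1]
  have hσadj : ∀ x y, G.Adj (g x) (g y) ↔ G.Adj x y := by
    intro x y
    by_cases hx : ∃ j, j < s ∧ u j = x
    · obtain ⟨j, hj, rfl⟩ := hx
      by_cases hy : ∃ l, l < s ∧ u l = y
      · obtain ⟨l, hl, rfl⟩ := hy
        rw [hg_u j hj, hg_u l hl, hAdjIff _ _ (by omega) (by omega), hAdjIff j l hj hl]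
        omega
      · have hyg : g y = y := hg_not y hy
        rw [hg_u j hj, hyg]
        have hynA : y ∉ A := fun hyA => hy ((hmemA y).mp hyA)
        exact iff_of_false (hcross _ (hu_A _ (by omega)) _ hynA)
          (hcross _ (hu_A j hj) _ hynA)
    · have hxg : g x = x := hg_not x hx
      have hxnA : x ∉ A := fun hxA => hx ((hmemA x).mp hxA)
      by_cases hy : ∃ l, l < s ∧ u l = y
      · obtain ⟨l, hl, rfl⟩ := hy
        rw [hxg, hg_u l hl]
        refine iff_of_false ?_ ?_
        · rw [G.adj_comm]
          exact hcross _ (hu_A _ (by omega)) _ hxnA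
        · rw [G.adj_comm]
          exact hcross _ (hu_A l hl) _ hxnA
      · rw [hxg, hg_not y hy]
  -- conclude
  set σ : V ≃ V := ⟨g, g, hgg, hgg⟩ with hσdef
  have hfix := crRel_aut_fix σ (fun x y => hσadj x y) (Fintype.card V - 1) (u 0)
  have hg0 : σ (u 0) = u (s - 1) := by
    show g (u 0) = u (s - 1)
    have := hg_u 0 (by omega)
    simpa using this
  rw [hg0] at hfix
  have h01 := crRel_discrete hlr hn _ _ hfix
  have := uinj 0 (s-1) (by omega) (by omega) h01
  omega


end MainCase2

section Final

attribute [local instance] Classical.propDecidable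

variable [Fintype V] {G : SimpleGraph V}

lemma isolated_case (hlr : IsLongRefinement G) (hn : 2 ≤ Fintype.card V)
    (x₀ : V) (hx₀ : ∀ w, ¬ G.Adj x₀ w) : False := by
  haveI hVne : Nonempty V := Fintype.card_pos_iff.mp (by omega)
  have hdisc := crRel_discrete hlr hn
  -- at most one isolated vertex
  have huniq : ∀ t, (∀ w, ¬ G.Adj t w) → t = x₀ := by
    intro t ht
    have hmono := regular_closed_mono (G := G) (A := {z | ∀ w, ¬ G.Adj z w})
      (fun z hz y hzy => absurd hzy (hz y)) (d := 0)
      (fun z hz => by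
        rw [vdeg]
        have : IsEmpty {u : V // G.Adj z u} := ⟨fun ⟨w, hw⟩ => hz w hw⟩
        exact Nat.card_of_isEmpty)
    exact hdisc t x₀ (hmono (Fintype.card V - 1) t ht x₀ hx₀)
  -- all other vertices have the same degree
  have hvdeg0 : vdeg G x₀ = 0 := by
    rw [vdeg]
    have : IsEmpty {u : V // G.Adj x₀ u} := ⟨fun ⟨w, hw⟩ => hx₀ w hw⟩
    exact Nat.card_of_isEmpty
  have hvdegpos : ∀ t, t ≠ x₀ → 0 < vdeg G t := by
    intro t ht
    have : ∃ w, G.Adj t w := by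
      by_contra hcon
      push_neg at hcon
      exact ht (huniq t hcon)
    obtain ⟨w, hw⟩ := this
    rw [vdeg]
    haveI : Nonempty {u : V // G.Adj t u} := ⟨⟨w, hw⟩⟩
    exact Nat.card_pos
  have hNc1 : NcG G 1 = 2 := Nc_exact hlr hn (by omega)
  have hclsne : ∀ p q : V, ¬ crRel G 1 p q →
      clsOf (crRel G 1) p ≠ clsOf (crRel G 1) q := by
    intro p q hpq he
    exact hpq (mem_clsOf_iff.mp (he ▸ mem_clsOf_self (crRel_equivalence 1) p))
  have hsamedeg : ∀ t1 t2, t1 ≠ x₀ → t2 ≠ x₀ → vdeg G t1 = vdeg G t2 := by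
    intro t1 t2 h1 h2
    by_contra hne
    have hn1 : ¬ crRel G 1 t1 t2 := fun h => hne (crRel_one_iff.mp h)
    have hn2 : ¬ crRel G 1 x₀ t1 := by
      intro h
      have := crRel_one_iff.mp h
      rw [hvdeg0] at this
      exact absurd this.symm (Nat.ne_of_gt (hvdegpos t1 h1))
    have hn3 : ¬ crRel G 1 x₀ t2 := by
      intro h
      have := crRel_one_iff.mp h
      rw [hvdeg0] at this
      exact absurd this.symm (Nat.ne_of_gt (hvdegpos t2 h2))
    have hsub : ({clsOf (crRel G 1) x₀, clsOf (crRel G 1) t1, clsOf (crRel G 1) t2} :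
        Finset (Finset V)) ⊆ univ.image (clsOf (crRel G 1)) := by
      intro K hK
      simp only [Finset.mem_insert, Finset.mem_singleton] at hK
      rcases hK with rfl | rfl | rfl <;> exact clsOf_mem_image _
    have hcard3 : ({clsOf (crRel G 1) x₀, clsOf (crRel G 1) t1, clsOf (crRel G 1) t2} :
        Finset (Finset V)).card = 3 := by
      rw [Finset.card_insert_of_notMem, Finset.card_insert_of_notMem,
        Finset.card_singleton]
      · simpa using hclsne t1 t2 hn1
      · simp only [Finset.mem_insert, Finset.mem_singleton]
        push_neg
        exact ⟨hclsne x₀ t1 hn2, hclsne x₀ t2 hn3⟩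
    have := Finset.card_le_card hsub
    rw [hcard3] at this
    have : (univ.image (clsOf (crRel G 1))).card = 2 := hNc1
    omega
  -- the rest is a regular closed set
  obtain ⟨t0, ht0⟩ := Fintype.exists_ne_of_one_lt_card (by omega) x₀
  have hclosed : ∀ t ∈ {z : V | z ≠ x₀}, ∀ w, G.Adj t w → w ∈ {z : V | z ≠ x₀} := by
    intro t ht w htw
    intro hw
    subst hw
    exact hx₀ t htw.symm
  have hmono := regular_closed_mono (G := G) (A := {z : V | z ≠ x₀}) hclosed
    (d := vdeg G t0) (fun z hz => hsamedeg z t0 hz ht0)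
  obtain ⟨w0, hw0⟩ : ∃ w, G.Adj t0 w := by
    by_contra hcon
    push_neg at hcon
    exact ht0 (huniq t0 hcon)
  have hw0ne : w0 ≠ x₀ := fun h => hx₀ t0 (h ▸ hw0).symm
  have hw0t0 : w0 ≠ t0 := fun h => G.loopless.irrefl t0 (h ▸ hw0)
  exact hw0t0 (hdisc w0 t0 (hmono (Fintype.card V - 1) w0 hw0ne t0 ht0))

theorem longRefinement_connected' (h : IsLongRefinement G) (hn : 2 ≤ Fintype.card V) :
    G.Connected := by
  haveI hVne : Nonempty V := Fintype.card_pos_iff.mp (by omega)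
  rw [SimpleGraph.connected_iff]
  refine ⟨?_, inferInstance⟩
  intro x y
  by_contra hnr
  by_cases hgood : ∃ A : Set V, (∀ x ∈ A, ∀ y, G.Adj x y → y ∈ A) ∧
      2 ≤ A.ncard ∧ 2 ≤ (Aᶜ : Set V).ncard
  · obtain ⟨A, hcl, h2, h2'⟩ := hgood
    rcases le_total A.ncard (Aᶜ : Set V).ncard with hle | hle
    · exact main_case h hn hcl h2 hle
    · have hclc : ∀ p ∈ (Aᶜ : Set V), ∀ q, G.Adj p q → q ∈ (Aᶜ : Set V) := by
        intro p hp q hpq hqA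
        exact hp (hcl q hqA p hpq.symm)
      have h2c : 2 ≤ ((Aᶜ : Set V)ᶜ).ncard := by rwa [compl_compl]
      have hlec : (Aᶜ : Set V).ncard ≤ ((Aᶜ : Set V)ᶜ).ncard := by rwa [compl_compl]
      exact main_case h hn hclc h2' hlec
  · -- no suitable closed set : there is an isolated vertex
    push_neg at hgood
    have hreach_closed : ∀ z : V, ∀ t ∈ {w : V | G.Reachable z w}, ∀ q, G.Adj t q →
        q ∈ {w : V | G.Reachable z w} := by
      intro z t ht q htq
      exact ht.trans htq.reachable
    have hiso_of_small : ∀ z : V, ({w : V | G.Reachable z w}).ncard ≤ 1 →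
        ∀ w, ¬ G.Adj z w := by
      intro z hz w hw
      have hsub : ({z, w} : Set V) ⊆ {t : V | G.Reachable z t} := by
        intro t ht
        rcases ht with rfl | ht
        · exact SimpleGraph.Reachable.refl t
        · rw [Set.mem_singleton_iff] at ht
          subst ht
          exact hw.reachable
      have hzw : z ≠ w := fun h => G.loopless.irrefl z (h ▸ hw)
      have := Set.ncard_le_ncard hsub (Set.toFinite _)
      rw [Set.ncard_pair hzw] at this
      omega
    -- one of x, y is isolated
    have hfind : ∃ x₀ : V, ∀ w, ¬ G.Adj x₀ w := by
      set Rx := {w : V | G.Reachable x w} with hRx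
      have hxin : x ∈ Rx := SimpleGraph.Reachable.refl x
      have hyco : ({w : V | G.Reachable y w}) ⊆ Rxᶜ := by
        intro t ht htx
        exact hnr (htx.trans ht.symm)
      have := hgood Rx (hreach_closed x)
      by_cases h2 : 2 ≤ Rx.ncard
      · have hco := this h2
        -- Rxᶜ.ncard ≤ 1, so reach-set of y has ncard ≤ 1
        have hRy : ({w : V | G.Reachable y w}).ncard ≤ 1 := by
          have := Set.ncard_le_ncard hyco (Set.toFinite _)
          omega
        exact ⟨y, hiso_of_small y hRy⟩
      · push_neg at h2
        exact ⟨x, hiso_of_small x (by rw [← hRx]; omega)⟩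
    obtain ⟨x₀, hx₀⟩ := hfind
    exact isolated_case h hn x₀ hx₀

end Final

/-- Every long-refinement graph on at least two vertices is connected. -/
theorem longRefinement_connected [Fintype V] (G : SimpleGraph V)
    (h : IsLongRefinement G) (hn : 2 ≤ Fintype.card V) :
    G.Connected := by
  exact longRefinement_connected' h hn
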